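/- For pure states drawn via a Haar-random isometry U from M to B⊗R with ⟨ψ_i^w| the (unnormalized) conditional interior vectors defined by U_w|0⟩ = (1/√|R|^{1/2})Σ_i |ψ_i^w⟩_B |i⟩_R, the average squared overlap satisfies E_w |⟨ψ_i^w|ψ_j^w⟩|² = δ_{ij} + 2^{−S_BH} + O(2^{−(S_BH + k)}), where |B| = 2^{S_BH} and |R| = 2^k. Formally: for a Haar-random (2-design) isometry U: C → B⊗R and vectors v_i = |R|^{1/2} (I_B ⊗ ⟨i|_R) U|0⟩, one has E|⟨v_i, v_j⟩|² = (|B|δ_{ij} + 1)/|B| · (1 + O(1/(|B||R|))). -/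

import Mathlib

open Matrix Kronecker
open scoped ComplexOrder

/-- The rank-one projector `|v⟩⟨v|`. -/
noncomputable def outer {ι : Type*} (v : ι → ℂ) : Matrix ι ι ℂ :=
  fun i j => v i * (starRingEnd ℂ) (v j)

/-- The swap unitary `τ(u⊗v) = v⊗u` on `H ⊗ H`, as a matrix. -/
noncomputable def swapM (ι : Type*) [DecidableEq ι] : Matrix (ι × ι) (ι × ι) ℂ :=
  fun x y => if x.1 = y.2 ∧ x.2 = y.1 then 1 else 0

/-- for a 2-design family of random pure states `u_w = U_w|0⟩` on `B ⊗ R`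
(i.e. `(1/|W|) Σ_w (u_w u_w*)^⊗2 = (I + τ)/(D² + D)` with `D = |B||R|`, the Haar average
of two copies), define the unnormalised conditional interior vectors
`v_i^w = |R|^{1/2} (I_B ⊗ ⟨i|_R) u_w`.  Then the average squared overlap satisfies
`E_w |⟨v_i^w, v_j^w⟩|² = (|B| δ_{ij} + 1)/|B| · (1 + O(1/(|B||R|)))`. -/
theorem average_overlap_interior_vectors :
    ∃ C : ℝ, 0 < C ∧
      ∀ (bb rr : ℕ), 0 < bb → 0 < rr →
      ∀ (W : Type) (_ : Fintype W) (_ : Nonempty W)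
        (u : W → (Fin bb × Fin rr) → ℂ),
        (∀ w, ∑ q, ‖u w q‖ ^ 2 = 1) →
        (((Fintype.card W : ℂ))⁻¹ • ∑ w, (outer (u w)) ⊗ₖ (outer (u w))
          = (((bb : ℂ) * rr) ^ 2 + (bb : ℂ) * rr)⁻¹ •
              ((1 : Matrix ((Fin bb × Fin rr) × (Fin bb × Fin rr))
                  ((Fin bb × Fin rr) × (Fin bb × Fin rr)) ℂ) + swapM (Fin bb × Fin rr))) →
        ∀ i j : Fin rr, ∃ ε : ℝ, |ε| ≤ C / ((bb : ℝ) * rr) ∧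
          ((Fintype.card W : ℝ))⁻¹ *
              ∑ w, ‖∑ β : Fin bb,
                (starRingEnd ℂ) ((Real.sqrt rr : ℂ) * u w (β, i)) *
                  ((Real.sqrt rr : ℂ) * u w (β, j))‖ ^ 2
            = (((bb : ℝ) * (if i = j then 1 else 0) + 1) / (bb : ℝ)) * (1 + ε) := by
  refine ⟨1, one_pos, ?_⟩
  intro bb rr hbb hrr W _ _ u hnorm hdes i j
  have hbR : (0:ℝ) < (bb:ℝ) * rr := by positivity
  refine ⟨-(1/((bb:ℝ)*rr+1)), ?_, ?_⟩
  · rw [abs_neg, abs_of_nonneg (by positivity)]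
    rw [div_le_div_iff₀ (by linarith) hbR, one_mul, one_mul]
    linarith
  · -- entrywise version of the 2-design hypothesis
    have key : ∀ (β β' : Fin bb),
        ((Fintype.card W : ℂ))⁻¹ * ∑ w, (u w (β,j) * (starRingEnd ℂ) (u w (β,i))) *
            (u w (β',i) * (starRingEnd ℂ) (u w (β',j)))
          = (((bb:ℂ)*rr)^2 + (bb:ℂ)*rr)⁻¹ *
              ((if i = j then 1 else 0) + (if β = β' then 1 else 0)) := by
      intro β β'
      have h := congrFun (congrFun hdes ((β,j),(β',i))) ((β,i),(β',j))
      simp only [Matrix.smul_apply, Matrix.sum_apply, Matrix.kroneckerMap_apply, outer,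
        Matrix.add_apply, Matrix.one_apply, swapM, smul_eq_mul] at h
      rw [h]
      congr 1
      have h1 : (((β,j),(β',i)) = (((β,i),(β',j)) : (Fin bb × Fin rr) × (Fin bb × Fin rr))) ↔ (i = j) := by
        constructor
        · intro hh
          have := congrArg (fun p => p.1.2) hh
          simp at this; exact this.symm
        · rintro rfl; rfl
      have h2 : ((((β:Fin bb),j) = ((β',j):Fin bb × Fin rr)) ∧ (((β':Fin bb),i) = ((β,i):Fin bb × Fin rr))) ↔ (β = β') := by
        constructor
        · rintro ⟨hh, _⟩
          exact congrArg Prod.fst hh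
        · rintro rfl; exact ⟨rfl, rfl⟩
      rw [if_congr h1 rfl rfl, if_congr h2 rfl rfl]
    have hsq : ((Real.sqrt rr : ℂ)) * ((Real.sqrt rr : ℂ)) = (rr : ℂ) := by
      rw [← Complex.ofReal_mul, Real.mul_self_sqrt (by positivity)]
      norm_cast
    have hz : ∀ w, (((‖∑ β : Fin bb,
          (starRingEnd ℂ) ((Real.sqrt rr : ℂ) * u w (β, i)) *
            ((Real.sqrt rr : ℂ) * u w (β, j))‖ : ℝ) : ℂ)) ^ 2
        = (rr:ℂ)^2 * ∑ β : Fin bb, ∑ β' : Fin bb,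
            (u w (β,j) * (starRingEnd ℂ) (u w (β,i))) *
              (u w (β',i) * (starRingEnd ℂ) (u w (β',j))) := by
      intro w
      set z : ℂ := ∑ β : Fin bb,
          (starRingEnd ℂ) ((Real.sqrt rr : ℂ) * u w (β, i)) * ((Real.sqrt rr : ℂ) * u w (β, j)) with hzdef
      have h1 : (((‖z‖ : ℝ) : ℂ)) ^ 2 = z * (starRingEnd ℂ) z := by
        rw [Complex.mul_conj, Complex.normSq_eq_norm_sq]
        push_cast
        ring
      rw [h1, hzdef, map_sum, Finset.sum_mul_sum, Finset.mul_sum]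
      refine Finset.sum_congr rfl fun β _ => ?_
      rw [Finset.mul_sum]
      refine Finset.sum_congr rfl fun β' _ => ?_
      simp only [_root_.map_mul, Complex.conj_conj, Complex.conj_ofReal]
      have h4 : ((rr:ℂ))^2 = ((Real.sqrt rr : ℂ)) * (Real.sqrt rr) * ((Real.sqrt rr) * (Real.sqrt rr)) := by
        rw [hsq]; ring
      rw [h4]; ring
    -- now the main computation, in ℂ
    rw [← Complex.ofReal_inj]
    push_cast [apply_ite Complex.ofReal]
    rw [Finset.sum_congr rfl (fun w _ => hz w), ← Finset.mul_sum]
    rw [show (∑ w, ∑ β : Fin bb, ∑ β' : Fin bb,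
        (u w (β,j) * (starRingEnd ℂ) (u w (β,i))) * (u w (β',i) * (starRingEnd ℂ) (u w (β',j))))
        = ∑ β : Fin bb, ∑ β' : Fin bb, ∑ w,
        (u w (β,j) * (starRingEnd ℂ) (u w (β,i))) * (u w (β',i) * (starRingEnd ℂ) (u w (β',j))) from by
      rw [Finset.sum_comm]
      exact Finset.sum_congr rfl fun β _ => Finset.sum_comm]
    have rearr : ((Fintype.card W : ℂ))⁻¹ * ((rr:ℂ)^2 * ∑ β : Fin bb, ∑ β' : Fin bb, ∑ w,
        (u w (β,j) * (starRingEnd ℂ) (u w (β,i))) * (u w (β',i) * (starRingEnd ℂ) (u w (β',j))))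
        = (rr:ℂ)^2 * ∑ β : Fin bb, ∑ β' : Fin bb, ((Fintype.card W : ℂ))⁻¹ * ∑ w,
        (u w (β,j) * (starRingEnd ℂ) (u w (β,i))) * (u w (β',i) * (starRingEnd ℂ) (u w (β',j))) := by
      simp_rw [Finset.mul_sum]
      exact Finset.sum_congr rfl fun β _ => Finset.sum_congr rfl fun β' _ =>
        Finset.sum_congr rfl fun w _ => by ring
    rw [rearr]
    simp_rw [key]
    have hsum : (∑ β : Fin bb, ∑ β' : Fin bb, (((bb:ℂ)*rr)^2 + (bb:ℂ)*rr)⁻¹ *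
        ((if i = j then 1 else 0) + (if β = β' then 1 else 0)))
        = (((bb:ℂ)*rr)^2 + (bb:ℂ)*rr)⁻¹ * ((bb:ℂ)^2 * (if i = j then 1 else 0) + bb) := by
      simp [mul_add, Finset.sum_add_distrib, Finset.sum_ite_eq, Finset.sum_const, Finset.card_fin]
      ring
    rw [hsum]
    have hbC : (bb:ℂ) ≠ 0 := Nat.cast_ne_zero.mpr hbb.ne'
    have hrC : (rr:ℂ) ≠ 0 := Nat.cast_ne_zero.mpr hrr.ne'
    have hd1 : ((bb:ℂ)*rr)^2 + (bb:ℂ)*rr ≠ 0 := by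
      have : (((bb:ℝ)*rr)^2 + (bb:ℝ)*rr) ≠ 0 := by positivity
      exact_mod_cast this
    have hd2 : (bb:ℂ)*rr + 1 ≠ 0 := by
      have : ((bb:ℝ)*rr + 1) ≠ 0 := by positivity
      exact_mod_cast this
    by_cases hij : i = j <;> simp only [hij, if_true, if_false] <;> field_simp <;> ring
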